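/- arXiv:1807.08295 — 2 statements merged into one kernel-verified Lean document; each statement's English description precedes it below -/
import Mathlib

section
/- Let S_n = K_{1,n} be the star with n ≥ 3 leaves. Then the geodetic hull number of the complementary prism S_n\bar{S}_n equals n+1. -/
open SimpleGraph

/-- The geodetic closed interval `I[u,v]`: `u`, `v`, and all vertices lying on
some shortest `u`–`v` path. -/
def geoInterval {V : Type*} (G : SimpleGraph V) (u v : V) : Set V :=
  {w | w = u ∨ w = v ∨ (G.Reachable u v ∧ G.dist u w + G.dist w v = G.dist u v)}

/-- A set is geodetically convex if it is closed under intervals. -/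
def IsGeoConvex {V : Type*} (G : SimpleGraph V) (S : Set V) : Prop :=
  ∀ u ∈ S, ∀ v ∈ S, geoInterval G u v ⊆ S

/-- The geodetic convex hull: the smallest convex set containing `S`. -/
def geoHull {V : Type*} (G : SimpleGraph V) (S : Set V) : Set V :=
  ⋂₀ {T | IsGeoConvex G T ∧ S ⊆ T}

/-- `S` is a hull set if its convex hull is the whole vertex set. -/
def IsHullSet {V : Type*} (G : SimpleGraph V) (S : Set V) : Prop :=
  geoHull G S = Set.univ

/-- The geodetic hull number: minimum cardinality of a hull set. -/
noncomputable def hullNumber {V : Type*} (G : SimpleGraph V) : ℕ :=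
  sInf {n | ∃ S : Set V, S.ncard = n ∧ IsHullSet G S}

/-- A vertex is simplicial if its closed neighborhood induces a clique. -/
def IsSimplicial {V : Type*} (G : SimpleGraph V) (v : V) : Prop :=
  ∀ a ∈ G.neighborSet v, ∀ b ∈ G.neighborSet v, a ≠ b → G.Adj a b

/-- The complementary prism `G G̅`: disjoint union of `G` (left copies) and its
complement (right copies), plus a perfect matching between corresponding vertices. -/
def compPrism {V : Type*} (G : SimpleGraph V) : SimpleGraph (V ⊕ V) where
  Adj x y :=
    match x, y with
    | .inl u, .inl w => G.Adj u w
    | .inr u, .inr w => u ≠ w ∧ ¬ G.Adj u w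
    | .inl u, .inr w => u = w
    | .inr u, .inl w => u = w
  symm := by
    constructor
    rintro (u | u) (w | w) h
    · exact h.symm
    · exact h.symm
    · exact h.symm
    · exact ⟨h.1.symm, fun a => h.2 a.symm⟩
  loopless := by
    constructor
    rintro (u | u) h
    · exact G.loopless.irrefl u h
    · exact h.1 rfl

/-- The star `K_{1,n}` with center `0` and `n` leaves. -/
def starGraph (n : ℕ) : SimpleGraph (Fin (n + 1)) where
  Adj i j := i ≠ j ∧ (i = 0 ∨ j = 0)
  symm := ⟨fun i j h => ⟨h.1.symm, h.2.symm⟩⟩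
  loopless := ⟨fun i h => h.1 rfl⟩

namespace StarPrism

open SimpleGraph Sum

variable {n : ℕ}

lemma adj_ll {a b : Fin (n+1)} :
    (compPrism (_root_.starGraph n)).Adj (inl a) (inl b) ↔ a ≠ b ∧ (a = 0 ∨ b = 0) := Iff.rfl

lemma adj_lr {a b : Fin (n+1)} :
    (compPrism (_root_.starGraph n)).Adj (inl a) (inr b) ↔ a = b := Iff.rfl

lemma adj_rl {a b : Fin (n+1)} :
    (compPrism (_root_.starGraph n)).Adj (inr a) (inl b) ↔ a = b := Iff.rfl

lemma adj_rr {a b : Fin (n+1)} :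
    (compPrism (_root_.starGraph n)).Adj (inr a) (inr b) ↔ a ≠ b ∧ ¬(a ≠ b ∧ (a = 0 ∨ b = 0)) := Iff.rfl

lemma dist_eq_two' {V : Type*} {G : SimpleGraph V} {u w v : V} (h1 : G.Adj u w) (h2 : G.Adj w v)
    (hne : u ≠ v) (hna : ¬ G.Adj u v) : G.dist u v = 2 := by
  have hle : G.dist u v ≤ 2 := by
    simpa using SimpleGraph.dist_le (Walk.cons h1 (Walk.cons h2 Walk.nil))
  have hr : G.Reachable u v := ⟨Walk.cons h1 (Walk.cons h2 Walk.nil)⟩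
  have h0 : 0 < G.dist u v := hr.pos_dist_of_ne hne
  have h1' : G.dist u v ≠ 1 := fun h => hna (SimpleGraph.dist_eq_one_iff_adj.mp h)
  omega

lemma dist_L0_Ri {i : Fin (n+1)} (hi : i ≠ 0) :
    (compPrism (_root_.starGraph n)).dist (inl 0) (inr i) = 2 := by
  refine dist_eq_two' (w := inl i) (adj_ll.mpr ⟨fun h => hi h.symm, Or.inl rfl⟩)
    (adj_lr.mpr rfl) (by simp) ?_
  rw [adj_lr]
  exact fun h => hi h.symm

lemma dist_R0_Ri {i : Fin (n+1)} (hi : i ≠ 0) :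
    (compPrism (_root_.starGraph n)).dist (inr 0) (inr i) = 3 := by
  set G := compPrism (_root_.starGraph n)
  let p : G.Walk (inr 0) (inr i) :=
    Walk.cons (adj_rl.mpr rfl)
      (Walk.cons (adj_ll.mpr ⟨fun h => hi h.symm, Or.inl rfl⟩)
        (Walk.cons (adj_lr.mpr rfl) Walk.nil))
  have hle : G.dist (inr 0) (inr i) ≤ 3 := by simpa [p] using SimpleGraph.dist_le p
  have hr : G.Reachable (inr 0) (inr i) := ⟨p⟩
  have hne : (inr 0 : Fin (n+1) ⊕ Fin (n+1)) ≠ inr i := by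
    simp [eq_comm, hi]
  obtain ⟨q, hq⟩ := hr.exists_walk_length_eq_dist
  obtain ⟨x, hadj, q', rfl⟩ := Walk.exists_eq_cons_of_ne hne q
  match x with
  | inl b =>
    have hb : b = 0 := (adj_rl.mp hadj).symm
    subst hb
    have h2 : G.dist (inl 0) (inr i) ≤ q'.length := SimpleGraph.dist_le q'
    rw [dist_L0_Ri hi] at h2
    simp only [Walk.length_cons] at hq
    omega
  | inr b =>
    exfalso
    obtain ⟨h1, h2⟩ := adj_rr.mp hadj
    exact h2 ⟨h1, Or.inl rfl⟩

/-- Distance table for the complementary prism of the star. -/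
def dv : (Fin (n+1) ⊕ Fin (n+1)) → (Fin (n+1) ⊕ Fin (n+1)) → ℕ
  | inl a, inl b => if a = b then 0 else if a = 0 ∨ b = 0 then 1 else 2
  | inl a, inr b => if a = b then 1 else 2
  | inr a, inl b => if a = b then 1 else 2
  | inr a, inr b => if a = b then 0 else if a = 0 ∨ b = 0 then 3 else 1

lemma dist_lr' {a b : Fin (n+1)} :
    (compPrism (_root_.starGraph n)).dist (inl a) (inr b) = if a = b then 1 else 2 := by
  by_cases hab : a = b
  · subst hab
    simp [SimpleGraph.dist_eq_one_iff_adj.mpr (adj_lr.mpr rfl)]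
  · rw [if_neg hab]
    by_cases hb : b = 0
    · subst hb
      refine dist_eq_two' (w := inl 0) (adj_ll.mpr ⟨hab, Or.inr rfl⟩) (adj_lr.mpr rfl)
        (by simp) (by rw [adj_lr]; exact hab)
    · by_cases ha : a = 0
      · subst ha
        exact dist_L0_Ri hb
      · refine dist_eq_two' (w := inr a) (adj_lr.mpr rfl)
          (adj_rr.mpr ⟨hab, fun h => h.2.elim ha hb⟩) (by simp) (by rw [adj_lr]; exact hab)

lemma dist_eq_dv (u v : Fin (n+1) ⊕ Fin (n+1)) :
    (compPrism (_root_.starGraph n)).dist u v = dv u v := by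
  rcases u with a | a <;> rcases v with b | b
  · show _ = if a = b then 0 else if a = 0 ∨ b = 0 then 1 else 2
    by_cases hab : a = b
    · subst hab; simp [SimpleGraph.dist_self]
    · rw [if_neg hab]
      by_cases h0 : a = 0 ∨ b = 0
      · rw [if_pos h0]
        exact SimpleGraph.dist_eq_one_iff_adj.mpr (adj_ll.mpr ⟨hab, h0⟩)
      · rw [if_neg h0]
        push_neg at h0
        refine dist_eq_two' (w := inl 0) (adj_ll.mpr ⟨h0.1, Or.inr rfl⟩)
          (adj_ll.mpr ⟨fun h => h0.2 h.symm, Or.inl rfl⟩) (by simp [hab]) ?_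
        rw [adj_ll]
        exact fun h => h.2.elim h0.1 h0.2
  · exact dist_lr'
  · show _ = if a = b then 1 else 2
    rw [SimpleGraph.dist_comm, dist_lr']
    simp [eq_comm]
  · show _ = if a = b then 0 else if a = 0 ∨ b = 0 then 3 else 1
    by_cases hab : a = b
    · subst hab; simp [SimpleGraph.dist_self]
    · rw [if_neg hab]
      by_cases h0 : a = 0 ∨ b = 0
      · rw [if_pos h0]
        rcases h0 with h0 | h0
        · subst h0; exact dist_R0_Ri fun h => hab h.symm
        · subst h0; rw [SimpleGraph.dist_comm]; exact dist_R0_Ri hab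
      · rw [if_neg h0]
        push_neg at h0
        exact SimpleGraph.dist_eq_one_iff_adj.mpr
          (adj_rr.mpr ⟨hab, fun h => h.2.elim h0.1 h0.2⟩)

end StarPrism


namespace StarPrism
open SimpleGraph Sum

variable {n : ℕ}

lemma convex_compl_R0 : IsGeoConvex (compPrism (_root_.starGraph n)) {x | x ≠ inr 0} := by
  rintro u hu v hv w (rfl | rfl | ⟨-, heq⟩)
  · exact hu
  · exact hv
  · simp only [Set.mem_setOf_eq, ne_eq] at hu hv ⊢
    rintro rfl
    rw [dist_eq_dv, dist_eq_dv, dist_eq_dv] at heq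
    rcases u with a | a <;> rcases v with b | b <;>
      simp only [ne_eq, inr.injEq, reduceCtorEq, not_false_eq_true, true_implies] at hu hv <;>
      simp only [dv] at heq <;>
      split_ifs at heq <;> first | omega | simp_all

lemma convex_Ci {i : Fin (n+1)} (hi : i ≠ 0) :
    IsGeoConvex (compPrism (_root_.starGraph n)) {x | x ≠ inl i ∧ x ≠ inr i} := by
  rintro u hu v hv w (rfl | rfl | ⟨-, heq⟩)
  · exact hu
  · exact hv
  · obtain ⟨hu1, hu2⟩ := hu
    obtain ⟨hv1, hv2⟩ := hv
    rw [dist_eq_dv, dist_eq_dv, dist_eq_dv] at heq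
    constructor <;> rintro rfl <;>
      rcases u with a | a <;> rcases v with b | b <;>
      simp only [ne_eq, inl.injEq, inr.injEq, reduceCtorEq, not_false_eq_true,
        true_implies] at hu1 hu2 hv1 hv2 <;>
      simp only [dv] at heq <;>
      split_ifs at heq <;> first | omega | simp_all

lemma subset_geoHull {V : Type*} (G : SimpleGraph V) (S : Set V) : S ⊆ geoHull G S :=
  fun x hx => Set.mem_sInter.mpr fun _ hT => hT.2 hx

lemma geoHull_convex {V : Type*} (G : SimpleGraph V) (S : Set V) :
    IsGeoConvex G (geoHull G S) := by
  intro u hu v hv w hw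
  refine Set.mem_sInter.mpr fun T hT => ?_
  exact hT.1 u (Set.mem_sInter.mp hu T hT) v (Set.mem_sInter.mp hv T hT) hw

lemma geoHull_subset {V : Type*} {G : SimpleGraph V} {S T : Set V}
    (hc : IsGeoConvex G T) (hs : S ⊆ T) : geoHull G S ⊆ T :=
  fun _ hx => Set.mem_sInter.mp hx T ⟨hc, hs⟩

lemma one_ne_zero_fin (hn : 3 ≤ n) : (1 : Fin (n+1)) ≠ 0 := by
  intro h
  have := congrArg Fin.val h
  rw [Fin.val_one', Fin.val_zero, Nat.mod_eq_of_lt (by omega)] at this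
  omega

lemma hullset_range_inr (hn : 3 ≤ n) :
    IsHullSet (compPrism (_root_.starGraph n)) (Set.range (inr : Fin (n+1) → Fin (n+1) ⊕ Fin (n+1))) := by
  set G := compPrism (_root_.starGraph n) with hG
  set S := Set.range (inr : Fin (n+1) → Fin (n+1) ⊕ Fin (n+1)) with hS
  have hR : ∀ b : Fin (n+1), inr b ∈ geoHull G S := fun b => subset_geoHull G S ⟨b, rfl⟩
  have h10 := one_ne_zero_fin hn
  have hL : ∀ a : Fin (n+1), (inl a : Fin (n+1) ⊕ Fin (n+1)) ∈ geoHull G S := by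
    intro a
    by_cases ha : a = 0
    · subst ha
      refine geoHull_convex G S (inr 1) (hR 1) (inr 0) (hR 0) ?_
      refine Or.inr (Or.inr ⟨?_, ?_⟩)
      · refine Reachable.of_dist_ne_zero ?_
        rw [dist_eq_dv]
        simp [dv, h10]
      · rw [dist_eq_dv, dist_eq_dv, dist_eq_dv]
        simp [dv, h10]
    · refine geoHull_convex G S (inr a) (hR a) (inr 0) (hR 0) ?_
      refine Or.inr (Or.inr ⟨?_, ?_⟩)
      · refine Reachable.of_dist_ne_zero ?_
        rw [dist_eq_dv]
        simp [dv, ha]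
      · rw [dist_eq_dv, dist_eq_dv, dist_eq_dv]
        simp [dv, ha]
  refine Set.eq_univ_of_forall ?_
  rintro (a | a)
  · exact hL a
  · exact hR a

lemma card_range_inr :
    (Set.range (inr : Fin (n+1) → Fin (n+1) ⊕ Fin (n+1))).ncard = n + 1 := by
  rw [← Set.image_univ, Set.ncard_image_of_injective _ Sum.inr_injective, Set.ncard_univ]
  simp

lemma lower_bound (hn : 3 ≤ n) {S : Set (Fin (n+1) ⊕ Fin (n+1))}
    (hS : IsHullSet (compPrism (_root_.starGraph n)) S) : n + 1 ≤ S.ncard := by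
  classical
  set G := compPrism (_root_.starGraph n)
  have hR0 : (inr 0 : Fin (n+1) ⊕ Fin (n+1)) ∈ S := by
    by_contra h
    have hsub : S ⊆ {x | x ≠ inr 0} := fun x hx => by rintro rfl; exact h hx
    have hh := geoHull_subset convex_compl_R0 hsub
    exact hh (hS ▸ Set.mem_univ (inr 0)) rfl
  have hmeet : ∀ i : Fin (n+1), i ≠ 0 → (inl i ∈ S ∨ inr i ∈ S) := by
    intro i hi
    by_contra h
    push_neg at h
    have hsub : S ⊆ {x | x ≠ inl i ∧ x ≠ inr i} :=
      fun x hx => ⟨fun e => h.1 (e ▸ hx), fun e => h.2 (e ▸ hx)⟩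
    have hh := geoHull_subset (convex_Ci hi) hsub
    exact (hh (hS ▸ Set.mem_univ (inl i))).1 rfl
  set f : Fin (n+1) → Fin (n+1) ⊕ Fin (n+1) :=
    fun i => if i = 0 then inr 0 else if inl i ∈ S then inl i else inr i with hf
  have hfr : ∀ i, f i ∈ S := by
    intro i
    rw [hf]
    dsimp only
    split_ifs with h1 h2
    · exact hR0
    · exact h2
    · exact (hmeet i h1).resolve_left h2
  have hinj : Function.Injective f := by
    have key : ∀ i, Sum.elim id id (f i) = i := by
      intro i
      by_cases h1 : i = 0
      · simp [hf, h1]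
      · by_cases h2 : inl i ∈ S <;> simp [hf, h1, h2]
    intro i j hij
    rw [← key i, ← key j, hij]
  calc n + 1 = (Set.range f).ncard := by
        rw [← Set.image_univ, Set.ncard_image_of_injective _ hinj, Set.ncard_univ]; simp
    _ ≤ S.ncard := Set.ncard_le_ncard (Set.range_subset_iff.mpr hfr) (Set.toFinite S)

end StarPrism


theorem hullNumber_compPrism_star (n : ℕ) (hn : 3 ≤ n) :
    hullNumber (compPrism (_root_.starGraph n)) = n + 1 := by
  have hmem : (n + 1) ∈ {m | ∃ S : Set (Fin (n+1) ⊕ Fin (n+1)), S.ncard = m ∧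
      IsHullSet (compPrism (_root_.starGraph n)) S} :=
    ⟨Set.range Sum.inr, StarPrism.card_range_inr, StarPrism.hullset_range_inr hn⟩
  refine le_antisymm (Nat.sInf_le hmem) (le_csInf ⟨n + 1, hmem⟩ ?_)
  rintro m ⟨S, rfl, hS⟩
  exact StarPrism.lower_bound hn hS
end

section
/- For every integer n ≥ 2, there exist connected graphs G with connected complement \bar{G} such that the geodetic hull number of the complementary prism satisfies h(G\bar{G}) = n. In particular, for n ≥ 3 the graph G obtained from the complete graph K_n on vertices u_1,...,u_n by adding two pendant vertices v_1 adjacent to u_1 and v_2 adjacent to u_2 satisfies: G and \bar{G} are connected and h(G\bar{G}) = n. -/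
open SimpleGraph

/-- The complete graph `K_n` with two pendant vertices attached:
`Sum.inr 0` is adjacent only to `Sum.inl 0`, and `Sum.inr 1` only to `Sum.inl 1`. -/
def pendantGraph (n : ℕ) : SimpleGraph (Fin n ⊕ Fin 2) where
  Adj x y :=
    match x, y with
    | .inl u, .inl w => u ≠ w
    | .inl u, .inr i => (u : ℕ) = (i : ℕ)
    | .inr i, .inl u => (u : ℕ) = (i : ℕ)
    | .inr _, .inr _ => False
  symm := by
    constructor
    rintro (u | i) (w | j) h
    · exact h.symm
    · exact h
    · exact h
    · exact h.elim
  loopless := by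
    constructor
    rintro (u | i) h
    · exact h rfl
    · exact h

namespace CP
variable {n : ℕ}

abbrev Lu (i : Fin n) : (Fin n ⊕ Fin 2) ⊕ (Fin n ⊕ Fin 2) := .inl (.inl i)
abbrev Lp (k : Fin 2) : (Fin n ⊕ Fin 2) ⊕ (Fin n ⊕ Fin 2) := .inl (.inr k)
abbrev Ru (i : Fin n) : (Fin n ⊕ Fin 2) ⊕ (Fin n ⊕ Fin 2) := .inr (.inl i)
abbrev Rp (k : Fin 2) : (Fin n ⊕ Fin 2) ⊕ (Fin n ⊕ Fin 2) := .inr (.inr k)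

abbrev H (n : ℕ) := compPrism (pendantGraph n)

lemma adj_LuLu {i j : Fin n} : (H n).Adj (Lu i) (Lu j) ↔ i ≠ j := Iff.rfl
lemma adj_LuLp {i : Fin n} {k : Fin 2} : (H n).Adj (Lu i) (Lp k) ↔ (i:ℕ) = (k:ℕ) := Iff.rfl
lemma adj_LpLu {i : Fin n} {k : Fin 2} : (H n).Adj (Lp k) (Lu i) ↔ (i:ℕ) = (k:ℕ) := Iff.rfl
lemma adj_LpLp {k k' : Fin 2} : (H n).Adj (Lp k) (Lp k') ↔ False := Iff.rfl
lemma adj_LuRu {i j : Fin n} : (H n).Adj (Lu i) (Ru j) ↔ i = j := by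
  constructor
  · intro h; exact Sum.inl.inj h
  · intro h; exact congrArg Sum.inl h
lemma adj_LuRp {i : Fin n} {k : Fin 2} : ¬ (H n).Adj (Lu i) (Rp k) := by
  intro h; exact Sum.inl_ne_inr h
lemma adj_LpRp {k k' : Fin 2} : (H n).Adj (Lp k) (Rp k') ↔ k = k' := by
  constructor
  · intro h; exact Sum.inr.inj h
  · intro h; exact congrArg Sum.inr h
lemma adj_LpRu {i : Fin n} {k : Fin 2} : ¬ (H n).Adj (Lp k) (Ru i) := by
  intro h; exact Sum.inr_ne_inl h
lemma adj_RuRu {i j : Fin n} : ¬ (H n).Adj (Ru i) (Ru j) := by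
  rintro ⟨h1, h2⟩
  exact h1 (congrArg Sum.inl (not_not.mp h2))
lemma adj_RuRp {i : Fin n} {k : Fin 2} : (H n).Adj (Ru i) (Rp k) ↔ (i:ℕ) ≠ (k:ℕ) := by
  constructor
  · rintro ⟨h1, h2⟩; exact h2
  · intro h; exact ⟨fun hc => Sum.inl_ne_inr hc, h⟩
lemma adj_RpRp {k k' : Fin 2} : (H n).Adj (Rp k) (Rp k') ↔ k ≠ k' := by
  constructor
  · rintro ⟨h1, h2⟩; intro hc; exact h1 (congrArg Sum.inr hc)
  · intro h; exact ⟨fun hc => h (Sum.inr.inj hc), fun hc => hc⟩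


lemma hidx (k : Fin 2) (hn : 2 ≤ n) : ((⟨(k:ℕ), lt_of_lt_of_le k.2 hn⟩ : Fin n) : ℕ) = (k:ℕ) := rfl

/-- every vertex is reachable from `Lu 0`-ish hub -/
lemma reach_Lu (hn : 2 ≤ n) (v : (Fin n ⊕ Fin 2) ⊕ (Fin n ⊕ Fin 2)) (i : Fin n) :
    (H n).Reachable v (Lu i) := by
  have hr : ∀ j : Fin n, (H n).Reachable (Lu j) (Lu i) := by
    intro j
    by_cases h : j = i
    · exact h ▸ Reachable.refl _
    · exact (adj_LuLu.mpr h).reachable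
  rcases v with (j | k) | (j | k)
  · exact hr j
  · have m : Fin n := ⟨(k:ℕ), lt_of_lt_of_le k.2 hn⟩
    exact ((adj_LpLu (i := ⟨(k:ℕ), lt_of_lt_of_le k.2 hn⟩)).mpr rfl).reachable.trans
      (hr _)
  · exact (((adj_LuRu (i := j) (j := j)).mpr rfl).symm.reachable).trans (hr j)
  · exact (((adj_LpRp (k := k) (k' := k)).mpr rfl).symm.reachable).trans
      ((((adj_LpLu (i := ⟨(k:ℕ), lt_of_lt_of_le k.2 hn⟩)).mpr rfl).reachable).trans (hr _))

lemma H_connected (hn : 2 ≤ n) : (H n).Connected := by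
  have : Nonempty (Fin n) := ⟨⟨0, by omega⟩⟩
  rw [connected_iff]
  refine ⟨fun u v => ?_, ⟨Lu ⟨0, by omega⟩⟩⟩
  exact (reach_Lu hn u ⟨0, by omega⟩).trans (reach_Lu hn v ⟨0, by omega⟩).symm


section distaux
variable {V : Type*} {G : SimpleGraph V} {u v x : V}

lemma dist_le_one_of_adj (h : G.Adj u v) : G.dist u v ≤ 1 := by
  simpa using SimpleGraph.dist_le (Walk.cons h Walk.nil)

lemma dist_le_aux (hc : G.Connected) (x : V) (h1 : u = x ∨ G.Adj u x)
    (h2 : x = v ∨ G.Adj x v) : G.dist u v ≤ 2 := by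
  have t := hc.dist_triangle (u := u) (v := x) (w := v)
  have a1 : G.dist u x ≤ 1 := by
    rcases h1 with h | h
    · simp [h, SimpleGraph.dist_self]
    · exact dist_le_one_of_adj h
  have a2 : G.dist x v ≤ 1 := by
    rcases h2 with h | h
    · simp [h, SimpleGraph.dist_self]
    · exact dist_le_one_of_adj h
  omega

lemma two_le_dist (hc : G.Connected) (hne : u ≠ v) (hadj : ¬ G.Adj u v) :
    2 ≤ G.dist u v := by
  have h0 : G.dist u v ≠ 0 := fun h => hne (hc.dist_eq_zero_iff.mp h)
  have h1 : G.dist u v ≠ 1 := fun h => hadj (dist_eq_one_iff_adj.mp h)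
  omega

lemma mid_of_dist_eq_two (hr : G.Reachable u v) (h : G.dist u v = 2) :
    ∃ x, G.Adj u x ∧ G.Adj x v := by
  obtain ⟨p, hp⟩ := hr.exists_walk_length_eq_dist
  rw [h] at hp
  cases p with
  | nil => simp at hp
  | cons h1 q =>
    cases q with
    | nil => simp at hp
    | cons h2 r =>
      cases r with
      | nil => exact ⟨_, h1, h2⟩
      | cons h3 s => simp [Walk.length_cons] at hp

end distaux

def other (k : Fin 2) : Fin 2 := ⟨1 - (k:ℕ), by omega⟩

lemma other_ne (k : Fin 2) : k ≠ other k := by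
  intro h
  have := congrArg Fin.val h
  have hk := k.2
  simp [other] at this
  omega

lemma coe_other (k : Fin 2) : ((other k : Fin 2) : ℕ) = 1 - (k:ℕ) := rfl

lemma L1 (hn : 2 ≤ n) (j : Fin n) (v : (Fin n ⊕ Fin 2) ⊕ (Fin n ⊕ Fin 2)) :
    (H n).dist (Lu j) v ≤ 2 := by
  have hc := H_connected hn
  rcases v with (i | k) | (i | k)
  · refine dist_le_aux hc (Lu i) ?_ (Or.inl rfl)
    by_cases h : j = i
    · exact Or.inl (by rw [h])
    · exact Or.inr (adj_LuLu.mpr h)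
  · refine dist_le_aux hc (Lu ⟨(k:ℕ), lt_of_lt_of_le k.2 hn⟩) ?_
      (Or.inr (adj_LuLp.mpr rfl))
    by_cases h : j = ⟨(k:ℕ), lt_of_lt_of_le k.2 hn⟩
    · exact Or.inl (by rw [h])
    · exact Or.inr (adj_LuLu.mpr h)
  · refine dist_le_aux hc (Lu i) ?_ (Or.inr (adj_LuRu.mpr rfl))
    by_cases h : j = i
    · exact Or.inl (by rw [h])
    · exact Or.inr (adj_LuLu.mpr h)
  · by_cases h : (j:ℕ) = (k:ℕ)
    · exact dist_le_aux hc (Lp k) (Or.inr (adj_LuLp.mpr h))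
        (Or.inr (adj_LpRp.mpr rfl))
    · exact dist_le_aux hc (Ru j) (Or.inr (adj_LuRu.mpr rfl))
        (Or.inr (adj_RuRp.mpr h))

lemma L2 (hn : 2 ≤ n) (k : Fin 2) (v : (Fin n ⊕ Fin 2) ⊕ (Fin n ⊕ Fin 2)) :
    (H n).dist (Rp k) v ≤ 2 := by
  have hc := H_connected hn
  rcases v with (i | k') | (i | k')
  · by_cases h : (i:ℕ) = (k:ℕ)
    · exact dist_le_aux hc (Lp k) (Or.inr ((adj_LpRp.mpr rfl).symm))
        (Or.inr (adj_LpLu.mpr h))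
    · exact dist_le_aux hc (Ru i) (Or.inr ((adj_RuRp.mpr h).symm))
        (Or.inr ((adj_LuRu.mpr rfl).symm))
  · by_cases h : k' = k
    · exact dist_le_aux hc (Lp k') (Or.inr ((adj_LpRp.mpr h).symm)) (Or.inl rfl)
    · exact dist_le_aux hc (Rp k') (Or.inr (adj_RpRp.mpr (Ne.symm h)))
        (Or.inr ((adj_LpRp.mpr rfl).symm))
  · by_cases h : (i:ℕ) = (k:ℕ)
    · refine dist_le_aux hc (Rp (other k)) (Or.inr (adj_RpRp.mpr (other_ne k))) ?_
      refine Or.inr ((adj_RuRp.mpr ?_).symm)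
      rw [coe_other, h]
      have := k.2
      omega
    · exact dist_le_aux hc (Ru i) (Or.inr ((adj_RuRp.mpr h).symm)) (Or.inl rfl)
  · by_cases h : k = k'
    · exact dist_le_aux hc (Rp k') (Or.inl (by rw [h])) (Or.inl rfl)
    · exact dist_le_aux hc (Rp k') (Or.inr (adj_RpRp.mpr h)) (Or.inl rfl)

lemma diam (hn : 2 ≤ n) (u v : (Fin n ⊕ Fin 2) ⊕ (Fin n ⊕ Fin 2)) :
    (H n).dist u v ≤ 3 := by
  have hc := H_connected hn
  rcases u with (j | k) | (j | k)
  · exact le_trans (L1 hn j v) (by norm_num)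
  · show (H n).dist (Lp k) v ≤ 3
    have t := hc.dist_triangle (u := Lp k) (v := Lu ⟨(k:ℕ), lt_of_lt_of_le k.2 hn⟩) (w := v)
    have a1 : (H n).dist (Lp k) (Lu ⟨(k:ℕ), lt_of_lt_of_le k.2 hn⟩) ≤ 1 :=
      dist_le_one_of_adj (adj_LpLu.mpr rfl)
    have a2 := L1 hn (⟨(k:ℕ), lt_of_lt_of_le k.2 hn⟩ : Fin n) v
    omega
  · show (H n).dist (Ru j) v ≤ 3
    have t := hc.dist_triangle (u := Ru j) (v := Lu j) (w := v)
    have a1 : (H n).dist (Ru j) (Lu j) ≤ 1 :=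
      dist_le_one_of_adj ((adj_LuRu.mpr rfl).symm)
    have a2 := L1 hn j v
    omega
  · exact le_trans (L2 hn k v) (by norm_num)


def Cset (i : Fin n) : Set ((Fin n ⊕ Fin 2) ⊕ (Fin n ⊕ Fin 2)) :=
  {w | w = Lu i ∨ w = Ru i ∨ ∃ k : Fin 2, w = Lp k ∧ (k:ℕ) = (i:ℕ)}

lemma key1 (hn : 2 ≤ n) {i : Fin n} {w x : (Fin n ⊕ Fin 2) ⊕ (Fin n ⊕ Fin 2)}
    (hw : w ∈ Cset i) (hx : x ∉ Cset i) (hadj : (H n).Adj w x)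
    (y : (Fin n ⊕ Fin 2) ⊕ (Fin n ⊕ Fin 2)) : (H n).dist x y ≤ 2 := by
  rcases hw with rfl | rfl | ⟨k, rfl, hk⟩
  · rcases x with (j | k) | (j | k)
    · exact L1 hn j y
    · exact absurd (Or.inr (Or.inr ⟨k, rfl, (adj_LuLp.mp hadj).symm⟩)) hx
    · have h := adj_LuRu.mp hadj
      exact absurd (Or.inr (Or.inl (by rw [h]))) hx
    · exact absurd hadj adj_LuRp
  · rcases x with (j | k) | (j | k)
    · have h := adj_LuRu.mp hadj.symm
      exact absurd (Or.inl (by rw [h])) hx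
    · exact absurd hadj.symm adj_LpRu
    · exact absurd hadj adj_RuRu
    · exact L2 hn k y
  · rcases x with (j | k') | (j | k')
    · have hj := adj_LpLu.mp hadj
      have : j = i := Fin.ext (by rw [hj, hk])
      exact absurd (Or.inl (by rw [this])) hx
    · exact (adj_LpLp.mp hadj).elim
    · exact absurd hadj adj_LpRu
    · exact L2 hn k' y

lemma key2 {i : Fin n} {w x y : (Fin n ⊕ Fin 2) ⊕ (Fin n ⊕ Fin 2)}
    (hw : w ∈ Cset i) (hx : x ∉ Cset i) (hy : y ∉ Cset i)
    (hax : (H n).Adj w x) (hay : (H n).Adj w y) : x = y ∨ (H n).Adj x y := by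
  rcases hw with rfl | rfl | ⟨k, rfl, hk⟩
  · rcases x with (j | k) | (j | k)
    · rcases y with (j' | k') | (j' | k')
      · by_cases h : j = j'
        · exact Or.inl (by rw [h])
        · exact Or.inr (adj_LuLu.mpr h)
      · exact absurd (Or.inr (Or.inr ⟨k', rfl, (adj_LuLp.mp hay).symm⟩)) hy
      · have h := adj_LuRu.mp hay
        exact absurd (Or.inr (Or.inl (by rw [h]))) hy
      · exact absurd hay adj_LuRp
    · exact absurd (Or.inr (Or.inr ⟨k, rfl, (adj_LuLp.mp hax).symm⟩)) hx
    · have h := adj_LuRu.mp hax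
      exact absurd (Or.inr (Or.inl (by rw [h]))) hx
    · exact absurd hax adj_LuRp
  · rcases x with (j | k) | (j | k)
    · have h := adj_LuRu.mp hax.symm
      exact absurd (Or.inl (by rw [h])) hx
    · exact absurd hax.symm adj_LpRu
    · exact absurd hax adj_RuRu
    · rcases y with (j' | k') | (j' | k')
      · have h := adj_LuRu.mp hay.symm
        exact absurd (Or.inl (by rw [h])) hy
      · exact absurd hay.symm adj_LpRu
      · exact absurd hay adj_RuRu
      · by_cases h : k = k'
        · exact Or.inl (by rw [h])
        · exact Or.inr (adj_RpRp.mpr h)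
  · rcases x with (j | k') | (j | k')
    · have hj := adj_LpLu.mp hax
      have : j = i := Fin.ext (by rw [hj, hk])
      exact absurd (Or.inl (by rw [this])) hx
    · exact (adj_LpLp.mp hax).elim
    · exact absurd hax adj_LpRu
    · rcases y with (j' | k'') | (j' | k'')
      · have hj := adj_LpLu.mp hay
        have : j' = i := Fin.ext (by rw [hj, hk])
        exact absurd (Or.inl (by rw [this])) hy
      · exact (adj_LpLp.mp hay).elim
      · exact absurd hay adj_LpRu
      · have h1 := adj_LpRp.mp hax
        have h2 := adj_LpRp.mp hay
        exact Or.inl (by rw [← h1, ← h2])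

lemma compl_Cset_convex (hn : 2 ≤ n) (i : Fin n) : IsGeoConvex (H n) (Cset i)ᶜ := by
  intro u hu v hv w hw
  by_contra hwC
  rw [Set.notMem_compl_iff] at hwC
  have hc := H_connected hn
  rw [Set.mem_compl_iff] at hu hv
  have hwu : w ≠ u := fun h => hu (h ▸ hwC)
  have hwv : w ≠ v := fun h => hv (h ▸ hwC)
  rcases hw with h | h | ⟨hr, heq⟩
  · exact hwu h
  · exact hwv h
  have d1 : 1 ≤ (H n).dist u w := hc.pos_dist_of_ne (Ne.symm hwu)
  have d2 : 1 ≤ (H n).dist w v := hc.pos_dist_of_ne hwv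
  by_cases hax : (H n).Adj w u
  · by_cases hay : (H n).Adj w v
    · have huv : (H n).dist u v ≤ 1 := by
        rcases key2 hwC hu hv hax hay with h | h
        · simp [h, SimpleGraph.dist_self]
        · exact dist_le_one_of_adj h
      omega
    · have d2' : 2 ≤ (H n).dist w v := two_le_dist hc hwv hay
      have huv : (H n).dist u v ≤ 2 := key1 hn hwC hu hax v
      omega
  · by_cases hay : (H n).Adj w v
    · have d1' : 2 ≤ (H n).dist u w :=
        two_le_dist hc (Ne.symm hwu) (fun h => hax h.symm)
      have huv : (H n).dist u v ≤ 2 := by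
        have := key1 hn hwC hv hay u
        rwa [SimpleGraph.dist_comm] at this
      omega
    · have d1' : 2 ≤ (H n).dist u w :=
        two_le_dist hc (Ne.symm hwu) (fun h => hax h.symm)
      have d2' : 2 ≤ (H n).dist w v := two_le_dist hc hwv hay
      have huv : (H n).dist u v ≤ 3 := diam hn u v
      omega


lemma subset_geoHull {V : Type*} (G : SimpleGraph V) (S : Set V) : S ⊆ geoHull G S :=
  fun _ hx => Set.mem_sInter.mpr fun _ hT => hT.2 hx

lemma geoHull_subset {V : Type*} {G : SimpleGraph V} {S T : Set V}
    (hT : IsGeoConvex G T) (hS : S ⊆ T) : geoHull G S ⊆ T :=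
  fun _ hx => Set.mem_sInter.mp hx T ⟨hT, hS⟩

lemma interval_subset_geoHull {V : Type*} {G : SimpleGraph V} {S : Set V} {u v : V}
    (hu : u ∈ geoHull G S) (hv : v ∈ geoHull G S) :
    geoInterval G u v ⊆ geoHull G S :=
  fun _ hw => Set.mem_sInter.mpr fun T hT =>
    hT.1 u (Set.mem_sInter.mp hu T hT) v (Set.mem_sInter.mp hv T hT) hw

lemma dist_eq_two {V : Type*} {G : SimpleGraph V} {u v : V} (hc : G.Connected)
    (hne : u ≠ v) (hnadj : ¬ G.Adj u v) (hle : G.dist u v ≤ 2) : G.dist u v = 2 :=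
  le_antisymm hle (two_le_dist hc hne hnadj)

lemma dLpLp (hn : 2 ≤ n) : (H n).dist (Lp 0) (Lp 1) = 3 := by
  have hc := H_connected hn
  have hle := diam hn (Lp (n := n) 0) (Lp 1)
  have h0 : (H n).dist (Lp 0) (Lp 1) ≠ 0 := by
    intro h
    have := hc.dist_eq_zero_iff.mp h
    simp at this
  have h1 : (H n).dist (Lp 0) (Lp 1) ≠ 1 := by
    intro h
    exact adj_LpLp.mp (dist_eq_one_iff_adj.mp h)
  have h2 : (H n).dist (Lp 0) (Lp 1) ≠ 2 := by
    intro h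
    obtain ⟨x, hx1, hx2⟩ := mid_of_dist_eq_two (hc _ _) h
    rcases x with (j | k) | (j | k)
    · have e1 := adj_LpLu.mp hx1.symm
      have e2 := adj_LuLp.mp hx2
      simp at e1 e2
      omega
    · exact (adj_LpLp.mp hx1).elim
    · exact absurd hx1 adj_LpRu
    · have e1 := adj_LpRp.mp hx1
      have e2 := adj_LpRp.mp hx2.symm
      rw [← e1] at e2
      simp at e2
  omega

def f (n : ℕ) (i : Fin n) : (Fin n ⊕ Fin 2) ⊕ (Fin n ⊕ Fin 2) :=
  if (i : ℕ) = 0 then Lp 0 else if (i : ℕ) = 1 then Lp 1 else Lu i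

lemma f_inj : Function.Injective (f n) := by
  intro i j h
  unfold f at h
  split_ifs at h <;>
    simp only [Lp, Lu, Sum.inl.injEq, Sum.inr.injEq, Fin.ext_iff] at h <;>
    first
      | (exact Fin.ext (by omega))
      | simp_all

lemma mem_S0_Lp (hn : 2 ≤ n) (k : Fin 2) : Lp k ∈ Set.range (f n) := by
  rcases k with ⟨kv, hkv⟩
  interval_cases kv
  · exact ⟨⟨0, by omega⟩, by simp [f]⟩
  · exact ⟨⟨1, by omega⟩, by simp [f]⟩

lemma m_Lp (hn : 2 ≤ n) (k : Fin 2) : Lp k ∈ geoHull (H n) (Set.range (f n)) :=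
  subset_geoHull _ _ (mem_S0_Lp hn k)

lemma m_Lu (hn : 2 ≤ n) (i : Fin n) : Lu i ∈ geoHull (H n) (Set.range (f n)) := by
  have hc := H_connected hn
  by_cases h2 : 2 ≤ (i : ℕ)
  · refine subset_geoHull _ _ ⟨i, ?_⟩
    simp only [f]
    rw [if_neg (by omega), if_neg (by omega)]
  · refine interval_subset_geoHull (m_Lp hn 0) (m_Lp hn 1) ?_
    refine Or.inr (Or.inr ⟨hc _ _, ?_⟩)
    rw [dLpLp hn]
    by_cases h0 : (i : ℕ) = 0
    · have e1 : (H n).dist (Lp 0) (Lu i) = 1 :=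
        dist_eq_one_iff_adj.mpr (adj_LpLu.mpr (by simpa using h0))
      have e2 : (H n).dist (Lu i) (Lp 1) = 2 := by
        refine dist_eq_two hc (by simp) ?_ (L1 hn i _)
        intro hadj
        have := adj_LuLp.mp hadj
        simp at this
        omega
      rw [e1, e2]
    · have h1 : (i : ℕ) = 1 := by omega
      have e1 : (H n).dist (Lp 0) (Lu i) = 2 := by
        rw [SimpleGraph.dist_comm]
        refine dist_eq_two hc (by simp) ?_ (L1 hn i _)
        intro hadj
        have := adj_LuLp.mp hadj
        simp at this
        omega
      have e2 : (H n).dist (Lu i) (Lp 1) = 1 :=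
        dist_eq_one_iff_adj.mpr ((adj_LpLu.mpr (by simpa using h1)).symm)
      rw [e1, e2]

lemma m_Rp (hn : 2 ≤ n) (k : Fin 2) : Rp k ∈ geoHull (H n) (Set.range (f n)) := by
  have hc := H_connected hn
  refine interval_subset_geoHull (m_Lp hn 0) (m_Lp hn 1) ?_
  refine Or.inr (Or.inr ⟨hc _ _, ?_⟩)
  rw [dLpLp hn]
  rcases k with ⟨kv, hkv⟩
  interval_cases kv
  · have hk0 : (⟨0, hkv⟩ : Fin 2) = 0 := rfl
    rw [hk0]
    have e1 : (H n).dist (Lp 0) (Rp 0) = 1 :=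
      dist_eq_one_iff_adj.mpr (adj_LpRp.mpr rfl)
    have e2 : (H n).dist (Rp 0) (Lp 1) = 2 := by
      refine dist_eq_two hc (by simp) ?_ (L2 hn 0 _)
      intro hadj
      have := adj_LpRp.mp hadj.symm
      simp [Fin.ext_iff] at this
    rw [e1, e2]
  · have hk1 : (⟨1, hkv⟩ : Fin 2) = 1 := rfl
    rw [hk1]
    have e1 : (H n).dist (Lp 0) (Rp 1) = 2 := by
      refine dist_eq_two hc (by simp) ?_ ?_
      · intro hadj
        have := adj_LpRp.mp hadj
        simp [Fin.ext_iff] at this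
      · rw [SimpleGraph.dist_comm]
        exact L2 hn 1 _
    have e2 : (H n).dist (Rp 1) (Lp 1) = 1 :=
      dist_eq_one_iff_adj.mpr ((adj_LpRp.mpr rfl).symm)
    rw [e1, e2]

lemma m_Ru (hn : 2 ≤ n) (i : Fin n) : Ru i ∈ geoHull (H n) (Set.range (f n)) := by
  have hc := H_connected hn
  obtain ⟨k, hk⟩ : ∃ k : Fin 2, (i : ℕ) ≠ (k : ℕ) := by
    by_cases h : (i : ℕ) = 0
    · exact ⟨1, by simp [h]⟩
    · exact ⟨0, by simpa using h⟩
  refine interval_subset_geoHull (m_Lu hn i) (m_Rp hn k) ?_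
  refine Or.inr (Or.inr ⟨hc _ _, ?_⟩)
  have e0 : (H n).dist (Lu i) (Rp k) = 2 :=
    dist_eq_two hc (by simp) adj_LuRp (L1 hn i _)
  have e1 : (H n).dist (Lu i) (Ru i) = 1 :=
    dist_eq_one_iff_adj.mpr (adj_LuRu.mpr rfl)
  have e2 : (H n).dist (Ru i) (Rp k) = 1 :=
    dist_eq_one_iff_adj.mpr (adj_RuRp.mpr hk)
  rw [e0, e1, e2]

lemma hullset_S0 (hn : 2 ≤ n) : IsHullSet (H n) (Set.range (f n)) := by
  rw [IsHullSet, Set.eq_univ_iff_forall]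
  rintro ((j | k) | (j | k))
  · exact m_Lu hn j
  · exact m_Lp hn k
  · exact m_Ru hn j
  · exact m_Rp hn k

lemma ncard_S0 : (Set.range (f n)).ncard = n := by
  rw [← Set.image_univ, Set.ncard_image_of_injective _ f_inj, Set.ncard_univ,
    Nat.card_eq_fintype_card, Fintype.card_fin]

lemma Cset_disj {i j : Fin n} {x : (Fin n ⊕ Fin 2) ⊕ (Fin n ⊕ Fin 2)}
    (hx : x ∈ Cset i) (hy : x ∈ Cset j) : i = j := by
  rcases hx with rfl | rfl | ⟨k, rfl, hk⟩ <;>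
    rcases hy with h | h | ⟨k', h, hk'⟩ <;>
    simp only [Lp, Lu, Ru, Sum.inl.injEq, Sum.inr.injEq, Fin.ext_iff] at h ⊢ <;>
    first
      | omega
      | simp_all

lemma lower (hn : 2 ≤ n) {S : Set ((Fin n ⊕ Fin 2) ⊕ (Fin n ⊕ Fin 2))}
    (hS : IsHullSet (H n) S) : n ≤ S.ncard := by
  have hmem : ∀ i : Fin n, ∃ x, x ∈ S ∧ x ∈ Cset i := by
    intro i
    by_contra h
    push_neg at h
    have hsub : S ⊆ (Cset i)ᶜ := fun x hx => h x hx
    have hh := geoHull_subset (compl_Cset_convex hn i) hsub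
    have hLu : Lu i ∈ geoHull (H n) S := by rw [hS]; trivial
    exact (hh hLu) (Or.inl rfl)
  choose g hgS hgC using hmem
  have hginj : Function.Injective g := by
    intro i j h
    exact Cset_disj (hgC i) (h ▸ hgC j)
  have hinj2 : Function.Injective (fun i : Fin n => (⟨g i, hgS i⟩ : S)) :=
    fun i j h => hginj (congrArg Subtype.val h)
  have hcard := Nat.card_le_card_of_injective _ hinj2
  simpa [Nat.card_eq_fintype_card, Nat.card_coe_set_eq] using hcard

lemma pendant_connected (hn : 2 ≤ n) : (pendantGraph n).Connected := by
  have hne : Nonempty (Fin n ⊕ Fin 2) := ⟨.inr 0⟩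
  rw [connected_iff]
  refine ⟨fun u v => ?_, hne⟩
  have hub : ∀ w, (pendantGraph n).Reachable w (.inl ⟨0, by omega⟩) := by
    rintro (i | k)
    · by_cases h : i = ⟨0, by omega⟩
      · exact h ▸ Reachable.refl _
      · exact Adj.reachable (by exact h)
    · have hadj : (pendantGraph n).Adj (.inr k) (.inl ⟨(k:ℕ), lt_of_lt_of_le k.2 hn⟩) := rfl
      refine hadj.reachable.trans ?_
      by_cases h : (⟨(k:ℕ), lt_of_lt_of_le k.2 hn⟩ : Fin n) = ⟨0, by omega⟩
      · exact h ▸ Reachable.refl _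
      · exact Adj.reachable (by exact h)
  exact (hub u).trans (hub v).symm

lemma pendant_compl_connected (hn : 2 ≤ n) : (pendantGraph n)ᶜ.Connected := by
  have hne : Nonempty (Fin n ⊕ Fin 2) := ⟨.inr 0⟩
  rw [connected_iff]
  refine ⟨fun u v => ?_, hne⟩
  have hp01 : (pendantGraph n)ᶜ.Adj (.inr 1) (.inr 0) := by
    rw [compl_adj]
    exact ⟨by simp [Fin.ext_iff], fun h => h⟩
  have hub : ∀ w, (pendantGraph n)ᶜ.Reachable w (.inr 0) := by
    rintro (i | k)
    · by_cases h : (i : ℕ) = 0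
      · refine Reachable.trans (Adj.reachable ?_) hp01.reachable
        rw [compl_adj]
        refine ⟨by simp, ?_⟩
        show ¬ ((i : ℕ) = ((1 : Fin 2) : ℕ))
        simp [h]
      · refine Adj.reachable ?_
        rw [compl_adj]
        refine ⟨by simp, ?_⟩
        show ¬ ((i : ℕ) = ((0 : Fin 2) : ℕ))
        simpa using h
    · by_cases h : k = 0
      · exact h ▸ Reachable.refl _
      · refine Adj.reachable ?_
        rw [compl_adj]
        exact ⟨by simpa using h, fun hc => hc⟩
  exact (hub u).trans (hub v).symm

lemma main (hn : 2 ≤ n) : (pendantGraph n).Connected ∧ (pendantGraph n)ᶜ.Connected ∧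
    hullNumber (compPrism (pendantGraph n)) = n := by
  refine ⟨pendant_connected hn, pendant_compl_connected hn, ?_⟩
  have hmemn : n ∈ {m | ∃ S : Set ((Fin n ⊕ Fin 2) ⊕ (Fin n ⊕ Fin 2)),
      S.ncard = m ∧ IsHullSet (compPrism (pendantGraph n)) S} :=
    ⟨Set.range (f n), ncard_S0, hullset_S0 hn⟩
  refine le_antisymm (Nat.sInf_le hmemn) (le_csInf ⟨n, hmemn⟩ ?_)
  rintro m ⟨S, rfl, hS⟩
  exact lower hn hS

end CP

theorem hullNumber_compPrism_unbounded :
    (∀ n : ℕ, 2 ≤ n → ∃ (V : Type) (_ : Fintype V) (G : SimpleGraph V),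
      G.Connected ∧ Gᶜ.Connected ∧ hullNumber (compPrism G) = n) ∧
    (∀ n : ℕ, 3 ≤ n → (pendantGraph n).Connected ∧ (pendantGraph n)ᶜ.Connected ∧
      hullNumber (compPrism (pendantGraph n)) = n) := by
  constructor
  · intro n hn
    exact ⟨Fin n ⊕ Fin 2, inferInstance, pendantGraph n, (CP.main hn).1,
      (CP.main hn).2.1, (CP.main hn).2.2⟩
  · intro n hn
    exact CP.main (by omega)
end
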